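/- Let k ∈ ℕ and let S ⊆ ℤ be piecewise syndetic. Then the set {(a, d) ∈ ℤ² : d ≠ 0 and a, a+d, ..., a+kd ∈ S} is nonempty. -/

import Mathlib

/-- `T ⊆ ℤ` contains arbitrarily long intervals. -/
def ThickZ (T : Set ℤ) : Prop :=
  ∀ L : ℕ, ∃ a : ℤ, ∀ i : ℤ, a ≤ i → i < a + L → i ∈ T

/-- `S ⊆ ℤ` is piecewise syndetic: some `⋃_{t=1}^r (S - t)` is thick. -/
def PWSynZ (S : Set ℤ) : Prop :=
  ∃ r : ℕ, 0 < r ∧ ThickZ {x : ℤ | ∃ t : ℤ, 1 ≤ t ∧ t ≤ (r : ℤ) ∧ x + t ∈ S}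

open Filter in
/-- A finitary version of van der Waerden's theorem, obtained from the infinite
version in mathlib by a compactness (ultrafilter) argument. -/
lemma finitary_vdw (k : ℕ) (κ : Type) [Finite κ] :
    ∃ N : ℕ, ∀ C : ℕ → κ, ∃ b d : ℕ, 0 < d ∧ b + k * d < N ∧
      ∀ i : ℕ, i ≤ k → C (b + i * d) = C b := by
  by_contra h
  push_neg at h
  choose C hC using h
  -- take an ultrafilter extending the cofinite filter on ℕ
  let U : Ultrafilter ℕ := Ultrafilter.of Filter.cofinite
  have hUc : (U : Filter ℕ) ≤ Filter.cofinite := Ultrafilter.of_le _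
  -- limit coloring
  have hlim : ∀ n : ℕ, ∃ a : κ, {N : ℕ | C N n = a} ∈ U := by
    intro n
    obtain ⟨a, ha⟩ := Ultrafilter.eq_pure_of_finite (U.map fun N => C N n)
    refine ⟨a, ?_⟩
    have : {a} ∈ (U.map fun N => C N n) := by rw [ha]; exact rfl
    exact this
  choose c hc using hlim
  -- apply the infinite van der Waerden theorem to the limit coloring
  obtain ⟨d, hd, b, c0, hmono⟩ :=
    Combinatorics.exists_mono_homothetic_copy (Finset.range (k + 1)) c
  have hmono' : ∀ i : ℕ, i ≤ k → c (b + i * d) = c0 := by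
    intro i hi
    have := hmono i (Finset.mem_range.mpr (by omega))
    simpa [smul_eq_mul, mul_comm, add_comm] using this
  -- a set in the ultrafilter where everything works
  have hall : ∀ᶠ N in (U : Filter ℕ), ∀ i ∈ Finset.range (k + 1), C N (b + i * d) = c (b + i * d) := by
    apply Filter.eventually_all_finset (Finset.range (k + 1)) |>.mpr
    intro i _
    exact hc (b + i * d)
  have hbig : ∀ᶠ N in (U : Filter ℕ), b + k * d < N := by
    apply hUc
    simp only [Filter.mem_cofinite]
    exact (Set.finite_le_nat (b + k * d)).subset (by intro x hx; simpa using hx)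
  obtain ⟨N, hN1, hN2⟩ := (hall.and hbig).exists
  have hb0 : C N b = c0 := by
    have h0 := hN1 0 (Finset.mem_range.mpr (by omega))
    have h1 := hmono' 0 (Nat.zero_le k)
    simp only [Nat.zero_mul, Nat.add_zero] at h0 h1
    rw [h0, h1]
  obtain ⟨i, hi, hne⟩ := hC N b d hd hN2
  exact hne (by
    have := hN1 i (Finset.mem_range.mpr (by omega))
    rw [this, hmono' i hi, hb0])

/-- Van der Waerden's theorem, reformulated: for piecewise syndetic S ⊆ ℤ the set of
pairs (a, d) with d ≠ 0 and a, a+d, ..., a+kd ∈ S is nonempty. -/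
theorem progressionPairs_nonempty (k : ℕ) (S : Set ℤ) (hS : PWSynZ S) :
    Set.Nonempty {p : ℤ × ℤ | p.2 ≠ 0 ∧ ∀ i : ℕ, i ≤ k → p.1 + (i : ℤ) * p.2 ∈ S} := by
  obtain ⟨r, hr, hT⟩ := hS
  obtain ⟨N, hN⟩ := finitary_vdw k (Fin r)
  obtain ⟨a0, ha0⟩ := hT N
  have hex : ∀ n : ℕ, n < N → ∃ t : ℤ, 1 ≤ t ∧ t ≤ (r : ℤ) ∧ (a0 + n) + t ∈ S := by
    intro n hn
    exact ha0 (a0 + n) (by omega) (by omega)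
  -- coloring of [0, N) by the witness t
  let C : ℕ → Fin r := fun n =>
    if h : n < N then
      ⟨(hex n h).choose.toNat - 1, by
        obtain ⟨h1, h2, _⟩ := (hex n h).choose_spec
        omega⟩
    else ⟨0, hr⟩
  obtain ⟨b, d, hd, hbd, hcol⟩ := hN C
  have hlt : ∀ i : ℕ, i ≤ k → b + i * d < N := by
    intro i hi
    have : i * d ≤ k * d := Nat.mul_le_mul_right d hi
    omega
  have hbN : b < N := by have := hlt 0 (Nat.zero_le k); omega
  set t : ℤ := (hex b hbN).choose with ht
  obtain ⟨ht1, ht2, _⟩ := (hex b hbN).choose_spec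
  refine ⟨(a0 + b + t, (d : ℤ)), ?_, ?_⟩
  · simp only [ne_eq, Nat.cast_eq_zero]; omega
  · intro i hi
    have hi' := hlt i hi
    -- the t-witness at position b + i*d equals t
    have hCi : C (b + i * d) = C b := hcol i hi
    have hCi' : ((hex (b + i * d) hi').choose.toNat - 1 : ℕ) =
        ((hex b hbN).choose.toNat - 1 : ℕ) := by
      have e1 : C (b + i * d) = ⟨(hex (b + i * d) hi').choose.toNat - 1, by
        obtain ⟨h1, h2, _⟩ := (hex (b + i * d) hi').choose_spec; omega⟩ := dif_pos hi'
      have e2 : C b = ⟨(hex b hbN).choose.toNat - 1, by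
        obtain ⟨h1, h2, _⟩ := (hex b hbN).choose_spec; omega⟩ :=
        dif_pos hbN
      rw [e1, e2] at hCi
      simpa using hCi
    obtain ⟨hi1, hi2, hiS⟩ := (hex (b + i * d) hi').choose_spec
    have heq : (hex (b + i * d) hi').choose = t := by omega
    rw [heq] at hiS
    have : (a0 + ((b : ℤ) + (i : ℤ) * (d : ℤ))) + t ∈ S := by
      have : ((b + i * d : ℕ) : ℤ) = (b : ℤ) + (i : ℤ) * (d : ℤ) := by push_cast; ring
      rwa [this] at hiS
    convert this using 1
    ring
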